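/- Let c_k : X → ℂ be defined by c_k ≡ 1 for k even, c_{4ℓ+1}(x) = (−1)^{x_{4ℓ+3}} and c_{4ℓ+3}(x) = (−1)^{x_{4ℓ+1}} for ℓ ≥ 0, and define operators on L²(X, μ_X; ℂ) by (J_k f)(x) = (−1)^{x_1+⋯+x_{k−1}+1} · i · c_k(x) · f(x+δ_k) and (J'_k f)(x) = (−1)^{x_k} · i · (J_k f)(x). Then L²(X, μ_X)^ℝ := {f ∈ L²(X, μ_X; ℂ) : f(1−x) = conj(f(x)) for μ_X-a.e. x} is a closed real-linear subspace invariant under every J_k and every J'_k, and it is a real form: L²(X, μ_X)^ℝ ∩ i·L²(X, μ_X)^ℝ = {0} and L²(X, μ_X; ℂ) = L²(X, μ_X)^ℝ + i·L²(X, μ_X)^ℝ. -/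

import Mathlib

/-!
Common setup: `GWX` is the compact abelian group `X = ∏_{k ≥ 1} {0,1}` of 0-1 sequences
(with componentwise addition mod 2 and the product σ-algebra, which is generated by the
sets `X_k = {x : x_k = 1}`).  The coordinate `i : ℕ` of `x : GWX` represents the paper's
coordinate `x_{i+1}`, so the Lean index `k : ℕ` corresponds to the paper's index `k + 1`
throughout; in particular the paper's sign `(-1)^k` becomes `(-1)^(k+1)` here.
-/

open MeasureTheory Complex Filter
open scoped ENNReal

noncomputable section

abbrev GWX : Type := ℕ → ZMod 2

/-- `δ_k`: the sequence with `1` in the `k`-th place (the paper's `(k+1)`-th place)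
and `0` elsewhere. -/
def gwDelta (k : ℕ) : GWX := fun i => if i = k then 1 else 0

/-- The componentwise complement `x ↦ 1 - x`. -/
def gwFlip (x : GWX) : GWX := fun i => 1 - x i

/-- The sign `(-1)^{x_1 + ⋯ + x_{k-1} + 1}` of the paper, for the paper's index `k + 1`. -/
def gwSign (k : ℕ) (x : GWX) : ℂ := (-1 : ℂ) ^ ((∑ i ∈ Finset.range k, (x i).val) + 1)

/-- The functions `c_k` of Theorem 3.11: in the paper's (1-based) indexing, `c_k ≡ 1` for
`k` even, `c_{4ℓ+1}(x) = (-1)^{x_{4ℓ+3}}`, `c_{4ℓ+3}(x) = (-1)^{x_{4ℓ+1}}`.  In the Lean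
(0-based) indexing used here (`Lean k` = paper's `k+1`): `gwC k ≡ 1` for `k` odd,
`gwC k x = (-1)^{x (k+2)}` for `k ≡ 0 [MOD 4]`, and `gwC k x = (-1)^{x (k-2)}` for
`k ≡ 2 [MOD 4]`. -/
def gwC (k : ℕ) (x : GWX) : ℂ :=
  if k % 2 = 1 then 1
  else if k % 4 = 0 then (-1 : ℂ) ^ (x (k + 2)).val
  else (-1 : ℂ) ^ (x (k - 2)).val

/-! ### Auxiliary lemmas -/

lemma gw_neg_pow (a : ZMod 2) : (-1:ℂ)^((1-a).val) = -(-1:ℂ)^(a.val) := by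
  fin_cases a
  · show (-1:ℂ)^(((1:ZMod 2) - 0).val) = -(-1:ℂ)^((0:ZMod 2).val)
    rw [show ((1:ZMod 2) - 0).val = 1 from rfl, show (0:ZMod 2).val = 0 from rfl]; norm_num
  · show (-1:ℂ)^(((1:ZMod 2) - 1).val) = -(-1:ℂ)^((1:ZMod 2).val)
    rw [show ((1:ZMod 2) - 1).val = 0 from rfl, show (1:ZMod 2).val = 1 from rfl]; norm_num

lemma gwFlip_eq_add (x : GWX) : gwFlip x = x + (fun _ => 1) := by
  funext i
  have h : ∀ a : ZMod 2, 1 - a = a + 1 := by decide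
  exact h (x i)

lemma gwFlip_flip (x : GWX) : gwFlip (gwFlip x) = x := by
  funext i
  have h : ∀ a : ZMod 2, 1 - (1 - a) = a := by decide
  exact h (x i)

lemma gwFlip_add (x y : GWX) : gwFlip x + y = gwFlip (x + y) := by
  funext i
  have h : ∀ a b : ZMod 2, (1 - a) + b = 1 - (a + b) := by decide
  exact h (x i) (y i)

lemma gwSign_flip (k : ℕ) (x : GWX) : gwSign k (gwFlip x) = (-1:ℂ)^k * gwSign k x := by
  unfold gwSign
  rw [pow_succ, pow_succ, ← Finset.prod_pow_eq_pow_sum, ← Finset.prod_pow_eq_pow_sum]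
  have h : ∀ i ∈ Finset.range k, (-1:ℂ)^((gwFlip x i).val) = (-1) * (-1:ℂ)^((x i).val) := by
    intro i _
    show (-1:ℂ)^((1 - x i).val) = _
    rw [gw_neg_pow]; ring
  rw [Finset.prod_congr rfl h, Finset.prod_mul_distrib, Finset.prod_const, Finset.card_range]
  ring

lemma gwC_flip (k : ℕ) (x : GWX) : gwC k (gwFlip x) = (-1:ℂ)^(k+1) * gwC k x := by
  unfold gwC
  by_cases h1 : k % 2 = 1
  · have he : Even (k + 1) := by
      rcases Nat.odd_iff.2 h1 with ⟨m, hm⟩; exact ⟨m+1, by omega⟩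
    simp [h1, he.neg_one_pow]
  · have ho : Odd (k + 1) := by
      have : k % 2 = 0 := by omega
      rcases Nat.even_iff.2 this with ⟨m, hm⟩; exact ⟨m, by omega⟩
    have hk : (-1:ℂ)^(k+1) = -1 := ho.neg_one_pow
    by_cases h4 : k % 4 = 0 <;>
      simp only [h1, h4, if_true, if_false, hk] <;>
      · show (-1:ℂ)^((1 - x _).val) = _
        rw [gw_neg_pow]; ring

lemma gwSign_conj (k : ℕ) (x : GWX) : (starRingEnd ℂ) (gwSign k x) = gwSign k x := by
  simp [gwSign, map_pow]

lemma gwC_conj (k : ℕ) (x : GWX) : (starRingEnd ℂ) (gwC k x) = gwC k x := by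
  unfold gwC; split_ifs <;> simp [map_pow]

variable {μX : Measure GWX}

lemma gwT_mem (hmp : MeasurePreserving gwFlip μX μX) (f : Lp ℂ 2 μX) :
    MemLp (fun x => (starRingEnd ℂ) ((f : GWX → ℂ) (gwFlip x))) 2 μX := by
  have h1 : MemLp (fun x => (f : GWX → ℂ) (gwFlip x)) 2 μX :=
    (Lp.memLp f).comp_measurePreserving hmp
  refine MemLp.of_le h1 ?_ (Eventually.of_forall fun x => ?_)
  · exact continuous_star.comp_aestronglyMeasurable h1.aestronglyMeasurable
  · simp

/-- The antilinear involution `f ↦ conj (f ∘ gwFlip)` on `L²`. -/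
def gwT (hmp : MeasurePreserving gwFlip μX μX) (f : Lp ℂ 2 μX) : Lp ℂ 2 μX :=
  (gwT_mem hmp f).toLp _

lemma gwT_coe (hmp : MeasurePreserving gwFlip μX μX) (f : Lp ℂ 2 μX) :
    (↑(gwT hmp f) : GWX → ℂ) =ᵐ[μX] fun x => (starRingEnd ℂ) ((f : GWX → ℂ) (gwFlip x)) :=
  MemLp.coeFn_toLp _

lemma gwT_norm_sub (hmp : MeasurePreserving gwFlip μX μX) (f g : Lp ℂ 2 μX) :
    ‖gwT hmp f - gwT hmp g‖ = ‖f - g‖ := by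
  rw [Lp.norm_def, Lp.norm_def]
  congr 1
  have h1 : (↑(gwT hmp f - gwT hmp g) : GWX → ℂ) =ᵐ[μX]
      fun x => (starRingEnd ℂ) ((↑(f - g) : GWX → ℂ) (gwFlip x)) := by
    filter_upwards [Lp.coeFn_sub (gwT hmp f) (gwT hmp g), gwT_coe hmp f, gwT_coe hmp g,
      hmp.quasiMeasurePreserving.ae_eq_comp (Lp.coeFn_sub f g)] with x e1 e2 e3 e4
    have e4' : (↑(f - g) : GWX → ℂ) (gwFlip x)
        = (f : GWX → ℂ) (gwFlip x) - (g : GWX → ℂ) (gwFlip x) := e4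
    have e1' : (↑(gwT hmp f - gwT hmp g) : GWX → ℂ) x
        = (↑(gwT hmp f) : GWX → ℂ) x - (↑(gwT hmp g) : GWX → ℂ) x := e1
    rw [e1', e2, e3, e4', map_sub]
  rw [eLpNorm_congr_ae h1]
  have h2 : eLpNorm (fun x => (starRingEnd ℂ) ((↑(f - g) : GWX → ℂ) (gwFlip x))) 2 μX
      = eLpNorm ((↑(f-g) : GWX → ℂ) ∘ gwFlip) 2 μX := by
    apply eLpNorm_congr_norm_ae
    filter_upwards with x
    simp [Function.comp]
  rw [h2, eLpNorm_comp_measurePreserving (Lp.aestronglyMeasurable (f - g)) hmp]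

theorem gwC_real_form
    (μX : Measure GWX) [IsProbabilityMeasure μX]
    (hHaar : ∀ y : GWX, μX.map (· + y) = μX)
    (J J' : ℕ → Lp ℂ 2 μX → Lp ℂ 2 μX)
    (hJ : ∀ k f, (↑(J k f) : GWX → ℂ) =ᵐ[μX] fun x =>
      gwSign k x * Complex.I * gwC k x * (↑f : GWX → ℂ) (x + gwDelta k))
    (hJ' : ∀ k f, (↑(J' k f) : GWX → ℂ) =ᵐ[μX] fun x =>
      (-1 : ℂ) ^ (x k).val * Complex.I * (↑(J k f) : GWX → ℂ) x)
    (HR : Set (Lp ℂ 2 μX))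
    (hHR : HR = {f : Lp ℂ 2 μX | ∀ᵐ x ∂μX,
      (↑f : GWX → ℂ) (gwFlip x) = (starRingEnd ℂ) ((↑f : GWX → ℂ) x)}) :
    IsClosed HR ∧
    (0 : Lp ℂ 2 μX) ∈ HR ∧
    (∀ f ∈ HR, ∀ g ∈ HR, f + g ∈ HR) ∧
    (∀ (r : ℝ), ∀ f ∈ HR, r • f ∈ HR) ∧
    (∀ k : ℕ, ∀ f ∈ HR, J k f ∈ HR ∧ J' k f ∈ HR) ∧
    (∀ f ∈ HR, (∃ g ∈ HR, f = Complex.I • g) → f = 0) ∧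
    (∀ f : Lp ℂ 2 μX, ∃ g ∈ HR, ∃ h ∈ HR, f = g + Complex.I • h) := by
  have hmeas_add : ∀ y : GWX, Measurable (fun x : GWX => x + y) := fun y =>
    measurable_pi_lambda _ fun i =>
      (measurable_of_countable (fun a : ZMod 2 => a + y i)).comp (measurable_pi_apply i)
  have hmp : ∀ y : GWX, MeasurePreserving (· + y) μX μX := fun y => ⟨hmeas_add y, hHaar y⟩
  have hmpf : MeasurePreserving gwFlip μX μX := by
    have h : gwFlip = (· + (fun _ => (1 : ZMod 2))) := funext gwFlip_eq_add
    rw [h]; exact hmp _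
  have hmem : ∀ f : Lp ℂ 2 μX, f ∈ HR ↔
      (∀ᵐ x ∂μX, (↑f : GWX → ℂ) (gwFlip x) = (starRingEnd ℂ) ((↑f : GWX → ℂ) x)) := by
    intro f; rw [hHR]; exact Iff.rfl
  -- characterization via the fixed points of gwT
  have hchar : ∀ f : Lp ℂ 2 μX, f ∈ HR ↔ gwT hmpf f = f := by
    intro f
    rw [hmem f]
    constructor
    · intro h
      apply Lp.ext
      filter_upwards [gwT_coe hmpf f, h] with x e1 e2
      have e1' : (↑(gwT hmpf f) : GWX → ℂ) x
          = (starRingEnd ℂ) ((↑f : GWX → ℂ) (gwFlip x)) := e1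
      rw [e1', e2, Complex.conj_conj]
    · intro h
      have h2 : (↑(gwT hmpf f) : GWX → ℂ) =ᵐ[μX] ↑f := by rw [h]
      filter_upwards [gwT_coe hmpf f, h2] with x e1 e2
      have e1' : (↑(gwT hmpf f) : GWX → ℂ) x
          = (starRingEnd ℂ) ((↑f : GWX → ℂ) (gwFlip x)) := e1
      have key : (starRingEnd ℂ) ((↑f : GWX → ℂ) (gwFlip x)) = (↑f : GWX → ℂ) x := by
        rw [← e1', e2]
      rw [← key, Complex.conj_conj]
  refine ⟨?_, ?_, ?_, ?_, ?_, ?_, ?_⟩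
  -- closedness
  · have hset : HR = {f : Lp ℂ 2 μX | gwT hmpf f = f} := Set.ext fun f => hchar f
    rw [hset]
    have hcont : Continuous (gwT hmpf) := by
      refine LipschitzWith.continuous (K := 1) (LipschitzWith.of_dist_le_mul fun f g => ?_)
      rw [dist_eq_norm, dist_eq_norm, gwT_norm_sub]
      simp
    exact isClosed_eq hcont continuous_id
  -- zero
  · rw [hmem]
    filter_upwards [Lp.coeFn_zero ℂ 2 μX,
      hmpf.quasiMeasurePreserving.ae_eq_comp (Lp.coeFn_zero ℂ 2 μX)] with x e1 e2
    have e1' : (↑(0 : Lp ℂ 2 μX) : GWX → ℂ) x = 0 := e1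
    have e2' : (↑(0 : Lp ℂ 2 μX) : GWX → ℂ) (gwFlip x) = 0 := e2
    rw [e1', e2', map_zero]
  -- addition
  · intro f hf g hg
    rw [hmem] at hf hg ⊢
    filter_upwards [Lp.coeFn_add f g,
      hmpf.quasiMeasurePreserving.ae_eq_comp (Lp.coeFn_add f g), hf, hg] with x e1 e2 ef eg
    have e1' : (↑(f + g) : GWX → ℂ) x = (↑f : GWX → ℂ) x + (↑g : GWX → ℂ) x := e1
    have e2' : (↑(f + g) : GWX → ℂ) (gwFlip x)
        = (↑f : GWX → ℂ) (gwFlip x) + (↑g : GWX → ℂ) (gwFlip x) := e2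
    rw [e2', e1', ef, eg, map_add]
  -- real scalar multiplication
  · intro r f hf
    rw [hmem] at hf ⊢
    filter_upwards [Lp.coeFn_smul r f,
      hmpf.quasiMeasurePreserving.ae_eq_comp (Lp.coeFn_smul r f), hf] with x e1 e2 ef
    have e1' : (↑(r • f) : GWX → ℂ) x = r • (↑f : GWX → ℂ) x := e1
    have e2' : (↑(r • f) : GWX → ℂ) (gwFlip x) = r • (↑f : GWX → ℂ) (gwFlip x) := e2
    rw [e2', e1', ef, Complex.real_smul, Complex.real_smul, map_mul, Complex.conj_ofReal]
  -- J and J' invariance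
  · intro k f hf
    rw [hmem] at hf
    have hJmem : ∀ᵐ x ∂μX, (↑(J k f) : GWX → ℂ) (gwFlip x)
        = (starRingEnd ℂ) ((↑(J k f) : GWX → ℂ) x) := by
      filter_upwards [hJ k f,
        hmpf.quasiMeasurePreserving.ae_eq_comp (hJ k f),
        (hmp (gwDelta k)).quasiMeasurePreserving.ae_eq_comp hf] with x e1 e2 e3
      have e1' : (↑(J k f) : GWX → ℂ) x
          = gwSign k x * Complex.I * gwC k x * (↑f : GWX → ℂ) (x + gwDelta k) := e1
      have e2' : (↑(J k f) : GWX → ℂ) (gwFlip x)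
          = gwSign k (gwFlip x) * Complex.I * gwC k (gwFlip x)
            * (↑f : GWX → ℂ) (gwFlip x + gwDelta k) := e2
      have e3' : (↑f : GWX → ℂ) (gwFlip (x + gwDelta k))
          = (starRingEnd ℂ) ((↑f : GWX → ℂ) (x + gwDelta k)) := e3
      rw [e2', e1', gwFlip_add, e3', gwSign_flip, gwC_flip, map_mul, map_mul, map_mul,
        gwSign_conj, gwC_conj, Complex.conj_I, pow_succ]
      have hkk : (-1:ℂ)^k * (-1:ℂ)^k = 1 := by
        rw [← pow_add]; exact Even.neg_one_pow ⟨k, rfl⟩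
      linear_combination (-(gwSign k x * Complex.I * gwC k x
        * (starRingEnd ℂ) ((↑f : GWX → ℂ) (x + gwDelta k)))) * hkk
    have hJ'mem : ∀ᵐ x ∂μX, (↑(J' k f) : GWX → ℂ) (gwFlip x)
        = (starRingEnd ℂ) ((↑(J' k f) : GWX → ℂ) x) := by
      filter_upwards [hJ' k f,
        hmpf.quasiMeasurePreserving.ae_eq_comp (hJ' k f), hJmem] with x e1 e2 e3
      have e1' : (↑(J' k f) : GWX → ℂ) x
          = (-1:ℂ)^((x k).val) * Complex.I * (↑(J k f) : GWX → ℂ) x := e1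
      have e2' : (↑(J' k f) : GWX → ℂ) (gwFlip x)
          = (-1:ℂ)^(((gwFlip x) k).val) * Complex.I * (↑(J k f) : GWX → ℂ) (gwFlip x) := e2
      have hflipk : (gwFlip x) k = 1 - x k := rfl
      rw [e2', e1', e3, hflipk, gw_neg_pow, map_mul, map_mul, Complex.conj_I]
      have hc : (starRingEnd ℂ) ((-1:ℂ)^((x k).val)) = (-1:ℂ)^((x k).val) := by
        simp [map_pow]
      rw [hc]
      ring
    exact ⟨(hmem _).mpr hJmem, (hmem _).mpr hJ'mem⟩
  -- HR ∩ i·HR = 0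
  · intro f hf hex
    obtain ⟨g, hg, hfg⟩ := hex
    rw [hmem] at hf hg
    have hcoe : (↑f : GWX → ℂ) =ᵐ[μX] fun x => Complex.I * (↑g : GWX → ℂ) x := by
      rw [hfg]
      filter_upwards [Lp.coeFn_smul Complex.I g] with x e
      have e' : (↑(Complex.I • g) : GWX → ℂ) x = Complex.I • (↑g : GWX → ℂ) x := e
      simpa [smul_eq_mul] using e'
    have hg0 : (↑g : GWX → ℂ) =ᵐ[μX] 0 := by
      filter_upwards [hcoe, hmpf.quasiMeasurePreserving.ae_eq_comp hcoe, hf, hg]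
        with x e1 e2 ef eg
      have e1' : (↑f : GWX → ℂ) x = Complex.I * (↑g : GWX → ℂ) x := e1
      have e2' : (↑f : GWX → ℂ) (gwFlip x) = Complex.I * (↑g : GWX → ℂ) (gwFlip x) := e2
      have h1 : Complex.I * (starRingEnd ℂ) ((↑g : GWX → ℂ) x)
          = -(Complex.I * (starRingEnd ℂ) ((↑g : GWX → ℂ) x)) := by
        calc Complex.I * (starRingEnd ℂ) ((↑g : GWX → ℂ) x)
            = Complex.I * (↑g : GWX → ℂ) (gwFlip x) := by rw [eg]
          _ = (↑f : GWX → ℂ) (gwFlip x) := by rw [e2']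
          _ = (starRingEnd ℂ) ((↑f : GWX → ℂ) x) := ef
          _ = (starRingEnd ℂ) (Complex.I * (↑g : GWX → ℂ) x) := by rw [e1']
          _ = -(Complex.I * (starRingEnd ℂ) ((↑g : GWX → ℂ) x)) := by
              rw [map_mul, Complex.conj_I]; ring
      have h2 : (starRingEnd ℂ) ((↑g : GWX → ℂ) x) = 0 := by
        linear_combination (-(Complex.I/2)) * h1
          + (starRingEnd ℂ) ((↑g : GWX → ℂ) x) * Complex.I_sq
      have h3 : (↑g : GWX → ℂ) x = 0 := by
        have := congrArg (starRingEnd ℂ) h2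
        simpa [Complex.conj_conj] using this
      exact h3
    have hgz : g = 0 := Lp.eq_zero_iff_ae_eq_zero.mpr hg0
    rw [hfg, hgz, smul_zero]
  -- decomposition
  · intro f
    set c : ℂ := -(2⁻¹) * Complex.I with hc
    refine ⟨(2⁻¹ : ℂ) • (f + gwT hmpf f), ?_, c • (f - gwT hmpf f), ?_, ?_⟩
    · rw [hmem]
      have hg1 : (↑((2⁻¹:ℂ) • (f + gwT hmpf f)) : GWX → ℂ) =ᵐ[μX]
          fun x => (2⁻¹:ℂ) * ((↑f : GWX → ℂ) x
            + (starRingEnd ℂ) ((↑f : GWX → ℂ) (gwFlip x))) := by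
        filter_upwards [Lp.coeFn_smul (2⁻¹:ℂ) (f + gwT hmpf f),
          Lp.coeFn_add f (gwT hmpf f), gwT_coe hmpf f] with x e1 e2 e3
        have e1' : (↑((2⁻¹:ℂ) • (f + gwT hmpf f)) : GWX → ℂ) x
            = (2⁻¹:ℂ) • (↑(f + gwT hmpf f) : GWX → ℂ) x := e1
        have e2' : (↑(f + gwT hmpf f) : GWX → ℂ) x
            = (↑f : GWX → ℂ) x + (↑(gwT hmpf f) : GWX → ℂ) x := e2
        have e3' : (↑(gwT hmpf f) : GWX → ℂ) x
            = (starRingEnd ℂ) ((↑f : GWX → ℂ) (gwFlip x)) := e3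
        rw [e1', e2', e3', smul_eq_mul]
      filter_upwards [hg1, hmpf.quasiMeasurePreserving.ae_eq_comp hg1] with x e1 e2
      have e1' : (↑((2⁻¹:ℂ) • (f + gwT hmpf f)) : GWX → ℂ) x
          = (2⁻¹:ℂ) * ((↑f : GWX → ℂ) x
            + (starRingEnd ℂ) ((↑f : GWX → ℂ) (gwFlip x))) := e1
      have e2' : (↑((2⁻¹:ℂ) • (f + gwT hmpf f)) : GWX → ℂ) (gwFlip x)
          = (2⁻¹:ℂ) * ((↑f : GWX → ℂ) (gwFlip x)
            + (starRingEnd ℂ) ((↑f : GWX → ℂ) (gwFlip (gwFlip x)))) := e2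
      rw [e2', e1', gwFlip_flip, map_mul, map_add, Complex.conj_conj]
      have : (starRingEnd ℂ) (2⁻¹:ℂ) = (2⁻¹:ℂ) := by simp [map_ofNat]
      rw [this]
      ring
    · rw [hmem]
      have hg1 : (↑(c • (f - gwT hmpf f)) : GWX → ℂ) =ᵐ[μX]
          fun x => c * ((↑f : GWX → ℂ) x
            - (starRingEnd ℂ) ((↑f : GWX → ℂ) (gwFlip x))) := by
        filter_upwards [Lp.coeFn_smul c (f - gwT hmpf f),
          Lp.coeFn_sub f (gwT hmpf f), gwT_coe hmpf f] with x e1 e2 e3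
        have e1' : (↑(c • (f - gwT hmpf f)) : GWX → ℂ) x
            = c • (↑(f - gwT hmpf f) : GWX → ℂ) x := e1
        have e2' : (↑(f - gwT hmpf f) : GWX → ℂ) x
            = (↑f : GWX → ℂ) x - (↑(gwT hmpf f) : GWX → ℂ) x := e2
        have e3' : (↑(gwT hmpf f) : GWX → ℂ) x
            = (starRingEnd ℂ) ((↑f : GWX → ℂ) (gwFlip x)) := e3
        rw [e1', e2', e3', smul_eq_mul]
      filter_upwards [hg1, hmpf.quasiMeasurePreserving.ae_eq_comp hg1] with x e1 e2
      have e1' : (↑(c • (f - gwT hmpf f)) : GWX → ℂ) x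
          = c * ((↑f : GWX → ℂ) x
            - (starRingEnd ℂ) ((↑f : GWX → ℂ) (gwFlip x))) := e1
      have e2' : (↑(c • (f - gwT hmpf f)) : GWX → ℂ) (gwFlip x)
          = c * ((↑f : GWX → ℂ) (gwFlip x)
            - (starRingEnd ℂ) ((↑f : GWX → ℂ) (gwFlip (gwFlip x)))) := e2
      rw [e2', e1', gwFlip_flip, hc, map_mul, map_sub, Complex.conj_conj, map_mul, map_neg,
        Complex.conj_I]
      have : (starRingEnd ℂ) (2⁻¹:ℂ) = (2⁻¹:ℂ) := by simp [map_ofNat]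
      rw [this]
      ring
    · rw [smul_smul]
      have hI : Complex.I * c = (2⁻¹:ℂ) := by
        rw [hc]; linear_combination (-(2⁻¹:ℂ)) * Complex.I_sq
      rw [hI]
      have h2 : ((f + gwT hmpf f) + (f - gwT hmpf f)) = (2:ℂ) • f := by
        rw [two_smul]; abel
      rw [← smul_add, h2, smul_smul]
      norm_num
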